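/- Let Φ be a nonnegative m×n matrix with ‖Φx‖₁ ≤ ‖x‖₁ for all x, let α* ∈ ℝⁿ₊, and let x ∈ ℝⁿ₊ satisfy (Φx)_j ≥ λ/d for all j, where λ, d > 0. Then the KL divergence between the product Poisson distributions with means Φα* and Φx satisfies KL ≤ (d/λ)·‖α* − x‖₁². -/

import Mathlib

lemma kl_term_bound (a b : ℝ) (ha : 0 ≤ a) (hb : 0 < b) :
    a * Real.log (a / b) - a + b ≤ (a - b) ^ 2 / b := by
  rcases eq_or_lt_of_le ha with h | h
  · simp [← h, Real.log_zero]
    rw [le_div_iff₀ hb]; nlinarith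
  · have hlog : Real.log (a / b) ≤ a / b - 1 :=
      Real.log_le_sub_one_of_pos (div_pos h hb)
    have h2 : a * Real.log (a / b) ≤ a * (a / b - 1) := by
      exact mul_le_mul_of_nonneg_left hlog ha
    have hb' : b ≠ 0 := ne_of_gt hb
    have : a * (a / b - 1) - a + b = (a - b) ^ 2 / b := by
      field_simp; ring
    linarith

/-- Lemma 4: KL divergence bound for Poisson compressed sensing with an
    ℓ₁-nonexpansive nonnegative sensing matrix. -/
theorem poisson_kl_bound
    (m n : ℕ) (Φ : Matrix (Fin m) (Fin n) ℝ) (lam d : ℝ)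
    (hlam : 0 < lam) (hd : 0 < d)
    (hΦ : ∀ j i, 0 ≤ Φ j i)
    (hnonexp : ∀ y : Fin n → ℝ, ∑ j, |Φ.mulVec y j| ≤ ∑ i, |y i|)
    (α x : Fin n → ℝ) (hα : ∀ i, 0 ≤ α i) (hx : ∀ i, 0 ≤ x i)
    (hfloor : ∀ j, lam / d ≤ Φ.mulVec x j) :
    ∑ j, (Φ.mulVec α j * Real.log (Φ.mulVec α j / Φ.mulVec x j)
          - Φ.mulVec α j + Φ.mulVec x j)
      ≤ (d / lam) * (∑ i, |α i - x i|) ^ 2 := by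
  set u : Fin m → ℝ := fun j => Φ.mulVec α j - Φ.mulVec x j with hu
  have hbpos : ∀ j, 0 < Φ.mulVec x j := fun j =>
    lt_of_lt_of_le (div_pos hlam hd) (hfloor j)
  have hapos : ∀ j, 0 ≤ Φ.mulVec α j := by
    intro j
    simp only [Matrix.mulVec, dotProduct]
    exact Finset.sum_nonneg fun i _ => mul_nonneg (hΦ j i) (hα i)
  -- step 1: termwise
  have step1 : ∑ j, (Φ.mulVec α j * Real.log (Φ.mulVec α j / Φ.mulVec x j)
          - Φ.mulVec α j + Φ.mulVec x j) ≤ ∑ j, (d / lam) * (u j) ^ 2 := by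
    apply Finset.sum_le_sum
    intro j _
    have h1 := kl_term_bound (Φ.mulVec α j) (Φ.mulVec x j) (hapos j) (hbpos j)
    have h2 : (u j) ^ 2 / Φ.mulVec x j ≤ (d / lam) * (u j) ^ 2 := by
      rw [div_le_iff₀ (hbpos j)]
      have : lam / d * (u j) ^ 2 ≤ Φ.mulVec x j * (u j) ^ 2 :=
        mul_le_mul_of_nonneg_right (hfloor j) (sq_nonneg _)
      have hdl : d / lam * (lam / d) = 1 := by field_simp
      nlinarith [sq_nonneg (u j), div_pos hd hlam]
    simpa [hu] using h1.trans h2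
  -- step 2: ∑ u² ≤ (∑ |u|)²
  have hnn : 0 ≤ ∑ j, |u j| := Finset.sum_nonneg fun j _ => abs_nonneg _
  have step2 : ∑ j, (u j) ^ 2 ≤ (∑ j, |u j|) ^ 2 := by
    calc ∑ j, (u j) ^ 2 = ∑ j, |u j| * |u j| := by
          simp [sq_abs, sq]
      _ ≤ ∑ j, |u j| * (∑ k, |u k|) := by
          refine Finset.sum_le_sum fun j _ => ?_
          exact mul_le_mul_of_nonneg_left
            (Finset.single_le_sum (fun k _ => abs_nonneg (u k)) (Finset.mem_univ j))
            (abs_nonneg _)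
      _ = (∑ j, |u j|) ^ 2 := by rw [← Finset.sum_mul]; ring
  -- step 3: nonexpansive
  have hmul : ∀ j, u j = Φ.mulVec (fun i => α i - x i) j := by
    intro j
    simp [hu, Matrix.mulVec, dotProduct, mul_sub, Finset.sum_sub_distrib]
  have step3 : ∑ j, |u j| ≤ ∑ i, |α i - x i| := by
    have := hnonexp (fun i => α i - x i)
    simpa [← hmul] using this
  calc ∑ j, (Φ.mulVec α j * Real.log (Φ.mulVec α j / Φ.mulVec x j)
          - Φ.mulVec α j + Φ.mulVec x j)
      ≤ ∑ j, (d / lam) * (u j) ^ 2 := step1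
    _ = (d / lam) * ∑ j, (u j) ^ 2 := by rw [Finset.mul_sum]
    _ ≤ (d / lam) * (∑ j, |u j|) ^ 2 :=
        mul_le_mul_of_nonneg_left step2 (le_of_lt (div_pos hd hlam))
    _ ≤ (d / lam) * (∑ i, |α i - x i|) ^ 2 := by
        apply mul_le_mul_of_nonneg_left _ (le_of_lt (div_pos hd hlam))
        exact pow_le_pow_left₀ hnn step3 2
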